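/- Let d = (d₀, d₀, d₁) on {1,2,3} with 0 < d₁ < d₀ and γ = d₁/d₀. The set of 3×3 matrices expressible as a finite product of T^d-transforms is not convex: both P^d(1,2) and P^d(1,2)P^d(2,3)P^d(1,3) are finite products of T^d-transforms, but for every t ∈ (0,1) the convex combination (1-t)·P^d(1,2) + t·P^d(1,2)P^d(2,3)P^d(1,3) is not a finite product of T^d-transforms. -/

import Mathlib

set_option maxHeartbeats 1000000


open Matrix BigOperators

/-- The `d`-swap `P^d(i,j)`: the identity except on the pair `{i,j}`, where it has
entries `(i,i) = 1 - d j / d i`, `(i,j) = 1`, `(j,i) = d j / d i`, `(j,j) = 0`. -/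
noncomputable def Pswap {n : ℕ} (d : Fin n → ℝ) (i j : Fin n) : Matrix (Fin n) (Fin n) ℝ :=
  Matrix.of fun k l =>
    if k = i ∧ l = i then 1 - d j / d i
    else if k = i ∧ l = j then 1
    else if k = j ∧ l = i then d j / d i
    else if k = j ∧ l = j then 0
    else if k = l then 1 else 0

/-- The `T^d`-transform `T^d_λ(i,j) = (1-λ)·I + λ·P^d(i,j)`. -/
noncomputable def Td {n : ℕ} (d : Fin n → ℝ) (lam : ℝ) (i j : Fin n) :
    Matrix (Fin n) (Fin n) ℝ :=
  (1 - lam) • (1 : Matrix (Fin n) (Fin n) ℝ) + lam • Pswap d i j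

section
variable (d0 d1 lam : ℝ)

lemma Td01 (hd0 : d0 ≠ 0) : Td ![d0,d0,d1] lam 0 1 =
    !![1-lam, lam, 0; lam, 1-lam, 0; 0, 0, 1] := by
  ext i j
  fin_cases i <;> fin_cases j <;>
    simp [Td, Pswap, Matrix.one_apply, div_self hd0, Matrix.vecHead, Matrix.vecTail] <;> ring

lemma Td02 : Td ![d0,d0,d1] lam 0 2 =
    !![1-lam*(d1/d0), 0, lam; 0, 1, 0; lam*(d1/d0), 0, 1-lam] := by
  ext i j
  fin_cases i <;> fin_cases j <;>
    simp [Td, Pswap, Matrix.one_apply, Matrix.vecHead, Matrix.vecTail] <;> ring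

lemma Td12 : Td ![d0,d0,d1] lam 1 2 =
    !![1, 0, 0; 0, 1-lam*(d1/d0), lam; 0, lam*(d1/d0), 1-lam] := by
  ext i j
  fin_cases i <;> fin_cases j <;>
    simp [Td, Pswap, Matrix.one_apply, Matrix.vecHead, Matrix.vecTail] <;> ring

lemma Td_zero (i j : Fin 3) : Td ![d0,d0,d1] 0 i j = 1 := by
  simp [Td]
end

def DS (d : Fin 3 → ℝ) (M : Matrix (Fin 3) (Fin 3) ℝ) : Prop :=
  (∀ k l, 0 ≤ M k l) ∧ (∀ l, ∑ k, M k l = 1) ∧ M *ᵥ d = d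

lemma DS_one (d : Fin 3 → ℝ) : DS d 1 := by
  refine ⟨fun k l => ?_, fun l => ?_, Matrix.one_mulVec d⟩
  · by_cases h : k = l <;> simp [Matrix.one_apply, h]
  · rw [Fin.sum_univ_three]
    fin_cases l <;> simp [Matrix.one_apply]

lemma DS_mul (d : Fin 3 → ℝ) {A B : Matrix (Fin 3) (Fin 3) ℝ}
    (hA : DS d A) (hB : DS d B) : DS d (A * B) := by
  obtain ⟨hA0, hA1, hAd⟩ := hA
  obtain ⟨hB0, hB1, hBd⟩ := hB
  refine ⟨fun k l => ?_, fun l => ?_, by rw [← Matrix.mulVec_mulVec, hBd, hAd]⟩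
  · rw [Matrix.mul_apply]
    exact Finset.sum_nonneg fun m _ => mul_nonneg (hA0 k m) (hB0 m l)
  · simp only [Matrix.mul_apply]
    rw [Finset.sum_comm]
    calc ∑ m, ∑ k, A k m * B m l = ∑ m, (∑ k, A k m) * B m l := by
          simp [Finset.sum_mul]
      _ = ∑ m, B m l := by simp [hA1]
      _ = 1 := hB1 l

lemma DS_Td (d0 d1 lam : ℝ) (h1 : 0 < d1) (h10 : d1 < d0) (hl0 : 0 ≤ lam) (hl1 : lam ≤ 1)
    {i j : Fin 3} (hij : i < j) : DS ![d0,d0,d1] (Td ![d0,d0,d1] lam i j) := by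
  have hd0 : 0 < d0 := h1.trans h10
  have hg0 : 0 ≤ d1/d0 := by positivity
  have hg1 : d1/d0 < 1 := (div_lt_one hd0).mpr h10
  have hd0' : d0 ≠ 0 := ne_of_gt hd0
  refine ⟨fun k l => ?_, fun l => ?_, ?_⟩ <;>
    fin_cases i <;> fin_cases j <;> simp_all <;>
    first
    | (fin_cases k <;> fin_cases l <;>
        simp [Td, Pswap, Matrix.one_apply, div_self hd0',
          Matrix.vecHead, Matrix.vecTail] <;> nlinarith)
    | (fin_cases l <;>
        simp [Td, Pswap, Matrix.one_apply, div_self hd0', Fin.sum_univ_three,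
          Matrix.vecHead, Matrix.vecTail] <;> ring_nf <;> field_simp)
    | (funext k; fin_cases k <;>
        simp [Td, Pswap, Matrix.one_apply, div_self hd0', Matrix.mulVec,
          dotProduct, Fin.sum_univ_three,
          Matrix.vecHead, Matrix.vecTail] <;> (try field_simp) <;> (try ring))

lemma DS_prod (d0 d1 : ℝ) (h1 : 0 < d1) (h10 : d1 < d0)
    (L : List (ℝ × Fin 3 × Fin 3))
    (hL : ∀ x ∈ L, x.2.1 < x.2.2 ∧ x.1 ∈ Set.Icc (0:ℝ) 1) :
    DS ![d0,d0,d1] ((L.map fun x => Td ![d0,d0,d1] x.1 x.2.1 x.2.2).prod) := by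
  induction L with
  | nil => simpa using DS_one _
  | cons a L ih =>
    obtain ⟨hij, hl0, hl1⟩ := hL a (by simp)
    simp only [List.map_cons, List.prod_cons]
    exact DS_mul _ (DS_Td d0 d1 a.1 h1 h10 hl0 hl1 hij) (ih fun x hx => hL x (by simp [hx]))

/-- target matrices -/
def MM (g t : ℝ) : Matrix (Fin 3) (Fin 3) ℝ := !![t*g, 1-t*g, 0; 1-t*g, 0, t; 0, t*g, 1-t]
def NN (g t : ℝ) : Matrix (Fin 3) (Fin 3) ℝ := !![1-t*g, 0, t; t*g, 1-t*g, 0; 0, t*g, 1-t]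

lemma key (d0 d1 t : ℝ) (h1 : 0 < d1) (h10 : d1 < d0) (ht0 : 0 < t) (ht1 : t < 1) :
    ∀ L : List (ℝ × Fin 3 × Fin 3),
      (∀ x ∈ L, x.2.1 < x.2.2 ∧ x.1 ∈ Set.Icc (0:ℝ) 1) →
      ((L.map fun x => Td ![d0,d0,d1] x.1 x.2.1 x.2.2).prod ≠ MM (d1/d0) t ∧
       (L.map fun x => Td ![d0,d0,d1] x.1 x.2.1 x.2.2).prod ≠ NN (d1/d0) t) := by
  have hd0 : 0 < d0 := h1.trans h10
  have hd0' : d0 ≠ 0 := ne_of_gt hd0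
  set g : ℝ := d1/d0 with hgdef
  have hg0 : 0 < g := by positivity
  have hg1 : g < 1 := (div_lt_one hd0).mpr h10
  intro L
  induction L with
  | nil =>
    intro _
    constructor <;> intro h <;>
      · have e := congrFun (congrFun h.symm 0) 0
        simp [MM, NN, Matrix.one_apply] at e
        first
        | nlinarith
        | (rcases e with e | e <;> linarith)
  | cons a L ih =>
    obtain ⟨lam, i, j⟩ := a
    intro hL
    have hLtail : ∀ x ∈ L, x.2.1 < x.2.2 ∧ x.1 ∈ Set.Icc (0:ℝ) 1 :=
      fun x hx => hL x (List.mem_cons_of_mem _ hx)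
    have hmem := hL _ List.mem_cons_self
    have hij : i < j := hmem.1
    have hl0 : (0:ℝ) ≤ lam := hmem.2.1
    have hl1 : lam ≤ 1 := hmem.2.2
    clear hmem hL
    have IH := ih hLtail
    simp only [List.map_cons, List.prod_cons]
    set P : Matrix (Fin 3) (Fin 3) ℝ :=
      (L.map fun x => Td ![d0,d0,d1] x.1 x.2.1 x.2.2).prod with hPdef
    obtain ⟨hP0, hP1, hPd⟩ := DS_prod d0 d1 h1 h10 L hLtail
    rw [← hPdef] at hP0 hP1 hPd
    rcases eq_or_lt_of_le hl0 with hlz | hlpos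
    · rw [← hlz, Td_zero, Matrix.one_mul]; exact IH
    have c0 := hP1 0; have c2 := hP1 2
    rw [Fin.sum_univ_three] at c0 c2
    have r0 := congrFun hPd 0
    have r1 := congrFun hPd 1
    simp [Matrix.mulVec, dotProduct, Fin.sum_univ_three] at r0 r1
    have hgl : lam * g < 1 := by nlinarith
    fin_cases i <;> fin_cases j <;> (try exact absurd hij (by decide)) <;>
      simp only [Fin.zero_eta, Fin.mk_one, Fin.reduceFinMk]
    -- CASE (0,1)
    · rw [Td01 d0 d1 lam hd0']
      rcases eq_or_lt_of_le hl1 with hlam1 | hlam1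
      · -- lam = 1 : the transform is the swap of rows 0 and 1
        subst hlam1
        have hQ : (!![1-(1:ℝ), 1, 0; 1, 1-1, 0; 0, 0, 1])
            = !![(0:ℝ), 1, 0; 1, 0, 0; 0, 0, 1] := by norm_num
        rw [hQ]
        have hQQ : (!![(0:ℝ), 1, 0; 1, 0, 0; 0, 0, 1]) *
            (!![(0:ℝ), 1, 0; 1, 0, 0; 0, 0, 1]) = 1 := by
          rw [Matrix.mul_fin_three, Matrix.one_fin_three]; norm_num
        constructor <;> intro h
        · have h2 := congrArg (fun X => (!![(0:ℝ), 1, 0; 1, 0, 0; 0, 0, 1]) * X) h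
          simp only [← Matrix.mul_assoc, hQQ, Matrix.one_mul] at h2
          refine IH.2 (h2.trans ?_)
          ext k l
          fin_cases k <;> fin_cases l <;>
            simp [MM, NN, Matrix.mul_apply, Fin.sum_univ_three]
        · have h2 := congrArg (fun X => (!![(0:ℝ), 1, 0; 1, 0, 0; 0, 0, 1]) * X) h
          simp only [← Matrix.mul_assoc, hQQ, Matrix.one_mul] at h2
          refine IH.1 (h2.trans ?_)
          ext k l
          fin_cases k <;> fin_cases l <;>
            simp [MM, NN, Matrix.mul_apply, Fin.sum_univ_three]
      · -- lam < 1
        constructor <;> intro h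
        · -- target MM
          have e02 := congrFun (congrFun h 0) 2
          have e11 := congrFun (congrFun h 1) 1
          simp [MM, Matrix.mul_apply, Fin.sum_univ_three] at e02 e11
          have hP02 : P 0 2 = 0 := by nlinarith [hP0 0 2, hP0 1 2]
          have hP12 : P 1 2 = 0 := by nlinarith [hP0 0 2, hP0 1 2]
          have hP01 : P 0 1 = 0 := by nlinarith [hP0 0 1, hP0 1 1]
          have hP11 : P 1 1 = 0 := by nlinarith [hP0 0 1, hP0 1 1]
          rw [hP01, hP02] at r0
          rw [hP11, hP12] at r1
          simp at r0 r1
          have h00 : P 0 0 = 1 := by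
            have := mul_right_cancel₀ hd0' (r0.trans (one_mul d0).symm); linarith
          have h10' : P 1 0 = 1 := by
            have := mul_right_cancel₀ hd0' (r1.trans (one_mul d0).symm); linarith
          linarith [hP0 2 0]
        · -- target NN
          have e01 := congrFun (congrFun h 0) 1
          have e12 := congrFun (congrFun h 1) 2
          simp [NN, Matrix.mul_apply, Fin.sum_univ_three] at e01 e12
          have hP01 : P 0 1 = 0 := by nlinarith [hP0 0 1, hP0 1 1]
          have hP11 : P 1 1 = 0 := by nlinarith [hP0 0 1, hP0 1 1]
          have hP12 : P 1 2 = 0 := by nlinarith [hP0 0 2, hP0 1 2]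
          have hP02 : P 0 2 = 0 := by nlinarith [hP0 0 2, hP0 1 2]
          rw [hP01, hP02] at r0
          rw [hP11, hP12] at r1
          simp at r0 r1
          have h00 : P 0 0 = 1 := by
            have := mul_right_cancel₀ hd0' (r0.trans (one_mul d0).symm); linarith
          have h10' : P 1 0 = 1 := by
            have := mul_right_cancel₀ hd0' (r1.trans (one_mul d0).symm); linarith
          linarith [hP0 2 0]
    -- CASE (0,2)
    · rw [Td02]
      rw [← hgdef]
      constructor <;> intro h
      · -- target MM : entries (0,2) and (2,2)
        have e02 := congrFun (congrFun h 0) 2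
        have e22 := congrFun (congrFun h 2) 2
        simp [MM, Matrix.mul_apply, Fin.sum_univ_three] at e02 e22
        have hP02 : P 0 2 = 0 := by nlinarith [hP0 0 2, hP0 2 2]
        have hP22 : P 2 2 = 0 := by nlinarith [hP0 0 2, hP0 2 2]
        rw [hP02, hP22] at e22
        simp at e22
        linarith
      · -- target NN : entries (2,0) and (0,1), then row 0 d-sum and column 2
        have e20 := congrFun (congrFun h 2) 0
        have e01 := congrFun (congrFun h 0) 1
        simp [NN, Matrix.mul_apply, Fin.sum_univ_three] at e20 e01
        have hP00 : P 0 0 = 0 := by nlinarith [hP0 0 0, hP0 2 0, mul_pos hlpos hg0]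
        have hP01 : P 0 1 = 0 := by nlinarith [hP0 0 1, hP0 2 1]
        rw [hP00, hP01] at r0
        simp at r0
        -- r0 : P 0 2 * d1 = d0, but P 0 2 ≤ 1 from column 2
        nlinarith [hP0 1 2, hP0 2 2, mul_nonneg (add_nonneg (hP0 1 2) (hP0 2 2)) h1.le]
    -- CASE (1,2)
    · rw [Td12]
      rw [← hgdef]
      constructor <;> intro h
      · -- target MM : entries (1,1) and (2,0), then row 1 d-sum and column 2
        have e11 := congrFun (congrFun h 1) 1
        have e20 := congrFun (congrFun h 2) 0
        simp [MM, Matrix.mul_apply, Fin.sum_univ_three] at e11 e20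
        have hP11 : P 1 1 = 0 := by nlinarith [hP0 1 1, hP0 2 1]
        have hP10 : P 1 0 = 0 := by nlinarith [hP0 1 0, hP0 2 0, mul_pos hlpos hg0]
        rw [hP10, hP11] at r1
        simp at r1
        nlinarith [hP0 0 2, hP0 2 2, mul_nonneg (add_nonneg (hP0 0 2) (hP0 2 2)) h1.le]
      · -- target NN : entries (1,2) and (2,2)
        have e12 := congrFun (congrFun h 1) 2
        have e22 := congrFun (congrFun h 2) 2
        simp [NN, Matrix.mul_apply, Fin.sum_univ_three] at e12 e22
        have hP12 : P 1 2 = 0 := by nlinarith [hP0 1 2, hP0 2 2]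
        have hP22 : P 2 2 = 0 := by nlinarith [hP0 1 2, hP0 2 2]
        rw [hP12, hP22] at e22
        simp at e22
        linarith

lemma Td_one (d : Fin 3 → ℝ) (i j : Fin 3) : Td d 1 i j = Pswap d i j := by
  simp [Td]

lemma conv_eq (d0 d1 t : ℝ) (hd0' : d0 ≠ 0) :
    (1 - t) • Pswap ![d0,d0,d1] 0 1 +
      t • (Pswap ![d0,d0,d1] 0 1 * Pswap ![d0,d0,d1] 1 2 * Pswap ![d0,d0,d1] 0 2) =
    MM (d1/d0) t := by
  ext k l
  fin_cases k <;> fin_cases l <;>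
    simp [Pswap, MM, Matrix.mul_apply, Fin.sum_univ_three, div_self hd0',
      Matrix.vecHead, Matrix.vecTail] <;> ring


set_option maxHeartbeats 1000000 in
/-- for `d = (d₀, d₀, d₁)` with `0 < d₁ < d₀`, the set of finite
products of `T^d`-transforms is not convex: `P^d(1,2)` and
`P^d(1,2)·P^d(2,3)·P^d(1,3)` are such products, but no strict convex combination
of the two is. -/
theorem stmt15 (d0 d1 : ℝ) (h1 : 0 < d1) (h10 : d1 < d0) (hsum : 2 * d0 + d1 = 1) :
    let d : Fin 3 → ℝ := ![d0, d0, d1]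
    let IsWETO : Matrix (Fin 3) (Fin 3) ℝ → Prop := fun M =>
      ∃ L : List (ℝ × Fin 3 × Fin 3),
        (∀ t ∈ L, t.2.1 < t.2.2 ∧ t.1 ∈ Set.Icc (0 : ℝ) 1) ∧
        M = (L.map fun t => Td d t.1 t.2.1 t.2.2).prod
    IsWETO (Pswap d 0 1) ∧
    IsWETO (Pswap d 0 1 * Pswap d 1 2 * Pswap d 0 2) ∧
    ∀ t : ℝ, 0 < t → t < 1 →
      ¬ IsWETO ((1 - t) • Pswap d 0 1 +
          t • (Pswap d 0 1 * Pswap d 1 2 * Pswap d 0 2)) := by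
  intro d IsWETO
  have hd0 : 0 < d0 := h1.trans h10
  have hd0' : d0 ≠ 0 := ne_of_gt hd0
  refine ⟨⟨[(1, 0, 1)], ?_, ?_⟩, ⟨[(1, 0, 1), (1, 1, 2), (1, 0, 2)], ?_, ?_⟩, ?_⟩
  · rintro x hx
    simp only [List.mem_singleton] at hx
    subst hx
    exact ⟨by decide, by norm_num⟩
  · simp [Td_one]
  · rintro x hx
    simp only [List.mem_cons, List.not_mem_nil, or_false] at hx
    rcases hx with hx | hx | hx <;> subst hx <;> exact ⟨by decide, by norm_num⟩
  · simp only [List.map_cons, List.map_nil, List.prod_cons, List.prod_nil,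
      Matrix.mul_one, Td_one]
    rw [Matrix.mul_assoc]
  · rintro t ht0 ht1 ⟨L, hLcond, hLeq⟩
    exact (key d0 d1 t h1 h10 ht0 ht1 L hLcond).1
      (hLeq.symm.trans (conv_eq d0 d1 t hd0'))
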